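/- In the common-panel factor-model setup, suppose α₁ < α₂. Then a_{1,p}/a_{2,p} → ∞ as p → ∞ and, for every x > 0, P(Q_p ≤ a_{1,p} x) → Ψ_{α₁}(x) as p → ∞. (Corollary 1, first case.) -/

import Mathlib

set_option maxHeartbeats 1000000


open MeasureTheory ProbabilityTheory Filter

noncomputable section

/-- The Fréchet distribution function with tail index `α`. -/
def frechetCDF (α x : ℝ) : ℝ := if 0 < x then Real.exp (-x ^ (-α)) else 0

/-- The norming constant `a_p = (Σ_{i<p} σ_i^α)^{1/α}`. -/
def normConst (σ : ℕ → ℝ) (α : ℝ) (p : ℕ) : ℝ :=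
  (∑ i ∈ Finset.range p, σ i ^ α) ^ (1 / α)

/-- Maximum of the first `p₁` variables of the first group and the first `p₂`
variables of the second group. -/
def Qmax {Ω : Type*} (X₁ X₂ : ℕ → Ω → ℝ) (p₁ p₂ : ℕ) (ω : Ω) : ℝ :=
  max (⨆ i : Fin p₁, X₁ i ω) (⨆ j : Fin p₂, X₂ j ω)

/-- Codomains of the family consisting of the factor `Z` and the two noise arrays. -/
def mixCodom (d : ℕ) : Unit ⊕ ℕ ⊕ ℕ → Type
  | Sum.inl _ => Fin d → ℝ
  | Sum.inr _ => ℝ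

instance mixCodomMeasurableSpace (d : ℕ) : ∀ i, MeasurableSpace (mixCodom d i)
  | Sum.inl _ => inferInstanceAs (MeasurableSpace (Fin d → ℝ))
  | Sum.inr (Sum.inl _) => inferInstanceAs (MeasurableSpace ℝ)
  | Sum.inr (Sum.inr _) => inferInstanceAs (MeasurableSpace ℝ)

/-- The family consisting of the factor `Z` and the two noise arrays. -/
def mixFun {Ω : Type*} {d : ℕ} (Z : Ω → Fin d → ℝ) (ε₁ ε₂ : ℕ → Ω → ℝ) :
    ∀ i : Unit ⊕ ℕ ⊕ ℕ, Ω → mixCodom d i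
  | Sum.inl _ => Z
  | Sum.inr (Sum.inl i) => ε₁ i
  | Sum.inr (Sum.inr j) => ε₂ j


section Helpers
open MeasureTheory Filter

lemma tail_toReal_le_one {μ : Measure ℝ} [IsProbabilityMeasure μ] (s : Set ℝ) :
    (μ s).toReal ≤ 1 := by
  have h := prob_le_one (μ := μ) (s := s)
  have := ENNReal.toReal_mono ENNReal.one_ne_top h
  simpa using this

lemma cdf_eq_one_sub {μ : Measure ℝ} [IsProbabilityMeasure μ] (s : ℝ) :
    (μ (Set.Iic s)).toReal = 1 - (μ (Set.Ioi s)).toReal := by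
  have hu : μ (Set.Iic s) + μ (Set.Ioi s) = 1 := by
    rw [← measure_union (Set.Iic_disjoint_Ioi le_rfl) measurableSet_Ioi, Set.Iic_union_Ioi,
      measure_univ]
  have h2 := congrArg ENNReal.toReal hu
  rw [ENNReal.toReal_add (measure_ne_top _ _) (measure_ne_top _ _), ENNReal.toReal_one] at h2
  linarith

lemma prod_Iic_eq_ofReal {μ : Measure ℝ} [IsProbabilityMeasure μ] (s : ℕ → ℝ) (p : ℕ) :
    ∏ i ∈ Finset.range p, μ (Set.Iic (s i)) =
      ENNReal.ofReal (∏ i ∈ Finset.range p, (1 - (μ (Set.Ioi (s i))).toReal)) := by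
  rw [ENNReal.ofReal_prod_of_nonneg
    (fun i _ => by linarith [tail_toReal_le_one (μ := μ) (Set.Ioi (s i))])]
  refine Finset.prod_congr rfl fun i _ => ?_
  rw [← cdf_eq_one_sub, ENNReal.ofReal_toReal (measure_ne_top _ _)]

lemma measurable_meas_Iic (μ : Measure ℝ) : Measurable fun s => μ (Set.Iic s) :=
  Monotone.measurable fun _ _ h => measure_mono (Set.Iic_subset_Iic.mpr h)

end Helpers


lemma rpow_neg_anti {s t α : ℝ} (hs : 0 < s) (hst : s ≤ t) (hα : 0 ≤ α) :
    t ^ (-α) ≤ s ^ (-α) := by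
  have ht : 0 < t := hs.trans_le hst
  rw [Real.rpow_neg ht.le, Real.rpow_neg hs.le]
  exact inv_anti₀ (Real.rpow_pos_of_pos hs α) (Real.rpow_le_rpow hs.le hst hα)

lemma exp_le_one_sub {u : ℝ} (h0 : 0 ≤ u) (h : u ≤ 1/2) :
    Real.exp (-u - 2*u^2) ≤ 1 - u := by
  have h1 : (0:ℝ) < 1 - u := by linarith
  rw [← Real.exp_log h1]
  apply Real.exp_le_exp.mpr
  have hlog := Real.log_le_sub_one_of_pos (x := (1-u)⁻¹) (by positivity)
  rw [Real.log_inv] at hlog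
  have h2 : (1-u)⁻¹ - 1 = u/(1-u) := by field_simp; ring
  have h3 : u/(1-u) ≤ u + 2*u^2 := by
    rw [div_le_iff₀ h1]; nlinarith
  linarith [h2 ▸ hlog]

lemma prod_one_sub_tendsto {u : ℕ → ℕ → ℝ} {S : ℝ}
    (h01 : ∀ᶠ p in atTop, ∀ i ∈ Finset.range p, 0 ≤ u p i ∧ u p i ≤ 1/2)
    (hS : Tendsto (fun p => ∑ i ∈ Finset.range p, u p i) atTop (nhds S))
    (hQ : Tendsto (fun p => ∑ i ∈ Finset.range p, (u p i)^2) atTop (nhds 0)) :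
    Tendsto (fun p => ∏ i ∈ Finset.range p, (1 - u p i)) atTop (nhds (Real.exp (-S))) := by
  have hA : Tendsto (fun p => Real.exp (-(∑ i ∈ Finset.range p, u p i)
      - 2 * ∑ i ∈ Finset.range p, (u p i)^2)) atTop (nhds (Real.exp (-S))) := by
    have : Tendsto (fun p => -(∑ i ∈ Finset.range p, u p i)
        - 2 * ∑ i ∈ Finset.range p, (u p i)^2) atTop (nhds (-S - 2*0)) :=
      (hS.neg).sub (hQ.const_mul 2)
    simpa [Function.comp_def] using (Real.continuous_exp.tendsto _).comp this
  have hB : Tendsto (fun p => Real.exp (-(∑ i ∈ Finset.range p, u p i))) atTop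
      (nhds (Real.exp (-S))) := (Real.continuous_exp.tendsto _).comp hS.neg
  refine tendsto_of_tendsto_of_tendsto_of_le_of_le' hA hB ?_ ?_
  · filter_upwards [h01] with p hp
    calc Real.exp (-(∑ i ∈ Finset.range p, u p i) - 2 * ∑ i ∈ Finset.range p, (u p i)^2)
        = ∏ i ∈ Finset.range p, Real.exp (-(u p i) - 2*(u p i)^2) := by
          rw [← Real.exp_sum]; congr 1
          rw [Finset.sum_sub_distrib, ← Finset.sum_neg_distrib, Finset.mul_sum]
      _ ≤ ∏ i ∈ Finset.range p, (1 - u p i) := by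
          refine Finset.prod_le_prod (fun i _ => (Real.exp_pos _).le) fun i hi => ?_
          exact exp_le_one_sub (hp i hi).1 (hp i hi).2
  · filter_upwards [h01] with p hp
    calc ∏ i ∈ Finset.range p, (1 - u p i)
        ≤ ∏ i ∈ Finset.range p, Real.exp (-(u p i)) := by
          refine Finset.prod_le_prod (fun i hi => by linarith [(hp i hi).2]) fun i hi => ?_
          linarith [Real.add_one_le_exp (-(u p i))]
      _ = Real.exp (-(∑ i ∈ Finset.range p, u p i)) := by
          rw [← Real.exp_sum, Finset.sum_neg_distrib]

lemma tail_sum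
    {μ : Measure ℝ} {α x M C₁ C₂ L : ℝ}
    (hα : 0 < α) (hx : 0 < x) (hM : 0 ≤ M) (hC₁ : 0 < C₁) (hC₁₂ : C₁ ≤ C₂)
    {σ : ℕ → ℝ} (hσ : ∀ i, σ i ∈ Set.Icc C₁ C₂)
    {g : ℕ → ℝ} (hg : ∀ i, |g i| ≤ M)
    (htail : Tendsto (fun s : ℝ => s ^ α * (μ (Set.Ioi s)).toReal) atTop (nhds 1))
    {a : ℕ → ℝ} (ha : Tendsto a atTop atTop)
    (hL : 0 ≤ L)
    (hr : Tendsto (fun p => (∑ i ∈ Finset.range p, σ i ^ α) * (a p * x) ^ (-α)) atTop (nhds L)) :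
    Tendsto (fun p => ∑ i ∈ Finset.range p, (μ (Set.Ioi ((a p * x - g i) / σ i))).toReal)
      atTop (nhds L) ∧
    Tendsto (fun p => ∑ i ∈ Finset.range p, ((μ (Set.Ioi ((a p * x - g i) / σ i))).toReal)^2)
      atTop (nhds 0) ∧
    ∀ᶠ p in atTop, ∀ i ∈ Finset.range p,
      (μ (Set.Ioi ((a p * x - g i) / σ i))).toReal ≤ 1/2 := by
  set G : ℝ → ℝ := fun s => (μ (Set.Ioi s)).toReal with hG
  set u : ℕ → ℕ → ℝ := fun p i => G ((a p * x - g i) / σ i) with hu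
  have hσpos : ∀ i, 0 < σ i := fun i => hC₁.trans_le (hσ i).1
  have hunn : ∀ p i, 0 ≤ u p i := fun p i => ENNReal.toReal_nonneg
  have hax : Tendsto (fun p => a p * x) atTop atTop := ha.atTop_mul_const hx
  -- key two-sided bound
  have key : ∀ ε : ℝ, 0 < ε → ε ≤ 1 → ∀ᶠ p in atTop,
      (0 < a p * x - M) ∧ ∀ i ∈ Finset.range p,
        (1-ε) * (σ i ^ α * (a p * x + M) ^ (-α)) ≤ u p i ∧
        u p i ≤ (1+ε) * (σ i ^ α * (a p * x - M) ^ (-α)) := by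
    intro ε hε hε1
    have htail' : ∀ᶠ s : ℝ in atTop, |s ^ α * G s - 1| ≤ ε := by
      have := Metric.tendsto_nhds.mp htail ε hε
      filter_upwards [this] with s hs
      rw [Real.dist_eq] at hs; exact hs.le
    obtain ⟨T, hT⟩ := htail'.exists_forall_of_atTop
    set T' := max T 1 with hT'
    have hT'1 : (1:ℝ) ≤ T' := le_max_right _ _
    filter_upwards [hax.eventually_ge_atTop (M + C₂ * T')] with p hp
    have hC₂ : 0 < C₂ := hC₁.trans_le hC₁₂
    have hpos : 0 < a p * x - M := by nlinarith
    refine ⟨hpos, fun i hi => ?_⟩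
    set s := (a p * x - g i) / σ i with hs
    have hgi := abs_le.mp (hg i)
    have hσi := hσ i
    have hlb : (a p * x - M) / σ i ≤ s :=
      div_le_div_of_nonneg_right (by linarith [hgi.2]) (hσpos i).le
    have hlb2 : (a p * x - M) / C₂ ≤ (a p * x - M) / σ i := by
      apply div_le_div_of_nonneg_left hpos.le (hσpos i) hσi.2
    have hsT : T' ≤ s := by
      refine le_trans ?_ (hlb2.trans hlb)
      rw [le_div_iff₀ hC₂]; nlinarith
    have hspos : 0 < s := lt_of_lt_of_le (by linarith) hsT
    have hub : s ≤ (a p * x + M) / σ i :=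
      div_le_div_of_nonneg_right (by linarith [hgi.1]) (hσpos i).le
    have htb := hT s (le_trans (le_max_left _ _) hsT)
    have habs := abs_le.mp htb
    have hGs : u p i = (s ^ α * G s) * s ^ (-α) := by
      show G s = (s ^ α * G s) * s ^ (-α)
      rw [Real.rpow_neg hspos.le, mul_comm (s ^ α), mul_assoc,
        mul_inv_cancel₀ (Real.rpow_pos_of_pos hspos α).ne', mul_one]
    have hdiv_ub : ((a p * x - M) / σ i) ^ (-α) = σ i ^ α * (a p * x - M) ^ (-α) := by
      rw [Real.rpow_neg (div_nonneg hpos.le (hσpos i).le),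
        Real.div_rpow hpos.le (hσpos i).le, inv_div, div_eq_mul_inv,
        ← Real.rpow_neg hpos.le]
    have hdiv_lb : ((a p * x + M) / σ i) ^ (-α) = σ i ^ α * (a p * x + M) ^ (-α) := by
      rw [Real.rpow_neg (div_nonneg (by linarith) (hσpos i).le),
        Real.div_rpow (by linarith : (0:ℝ) ≤ a p * x + M) (hσpos i).le, inv_div,
        div_eq_mul_inv, ← Real.rpow_neg (by linarith : (0:ℝ) ≤ a p * x + M)]
    constructor
    · rw [hGs, ← hdiv_lb]
      have h1 : ((a p * x + M) / σ i) ^ (-α) ≤ s ^ (-α) :=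
        rpow_neg_anti hspos hub hα.le
      have h2 : (1-ε) ≤ s ^ α * G s := by linarith
      have h3 : (0:ℝ) ≤ ((a p * x + M) / σ i) ^ (-α) :=
        Real.rpow_nonneg (div_nonneg (by linarith) (hσpos i).le) _
      nlinarith [Real.rpow_nonneg hspos.le (-α)]
    · rw [hGs, ← hdiv_ub]
      have h1 : s ^ (-α) ≤ ((a p * x - M) / σ i) ^ (-α) :=
        rpow_neg_anti (div_pos hpos (hσpos i)) hlb hα.le
      have h2 : s ^ α * G s ≤ 1 + ε := by linarith
      have h3 : (0:ℝ) ≤ s ^ (-α) := Real.rpow_nonneg hspos.le _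
      nlinarith [Real.rpow_nonneg (div_nonneg hpos.le (hσpos i).le) (-α),
        mul_nonneg (Real.rpow_nonneg hspos.le α) (hunn p i)]
  -- convergence of the shifted normalizing sequence
  have hsum_nn : ∀ p, (0:ℝ) ≤ ∑ i ∈ Finset.range p, σ i ^ α :=
    fun p => Finset.sum_nonneg fun i _ => Real.rpow_nonneg (hσpos i).le _
  have hshift : ∀ c : ℝ, Tendsto (fun p => (∑ i ∈ Finset.range p, σ i ^ α) *
      (a p * x + c) ^ (-α)) atTop (nhds L) := by
    intro c
    have h1 : Tendsto (fun p => 1 + c / (a p * x)) atTop (nhds 1) := by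
      have h := Tendsto.div_atTop (tendsto_const_nhds (x := c)) hax
      simpa using (tendsto_const_nhds (x := (1:ℝ))).add h
    have h2 : Tendsto (fun p => (1 + c / (a p * x)) ^ (-α)) atTop (nhds 1) := by
      have hcont := (Real.continuousAt_rpow_const 1 (-α) (Or.inl one_ne_zero)).tendsto
      simpa [Real.one_rpow, Function.comp_def] using hcont.comp h1
    have h3 : Tendsto (fun p => ((∑ i ∈ Finset.range p, σ i ^ α) * (a p * x) ^ (-α)) *
        (1 + c / (a p * x)) ^ (-α)) atTop (nhds L) := by simpa using hr.mul h2
    apply h3.congr'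
    filter_upwards [hax.eventually_ge_atTop (|c| + 1)] with p hp
    have hpos : 0 < a p * x := by have := abs_nonneg c; linarith
    have hc1 : -(a p * x) ≤ c := by have := neg_abs_le c; linarith
    have hpc : 0 ≤ 1 + c / (a p * x) := by
      have : (-1:ℝ) ≤ c / (a p * x) := by
        rw [le_div_iff₀ hpos]; linarith
      linarith
    have hkey : a p * x + c = (a p * x) * (1 + c / (a p * x)) := by
        rw [mul_add, mul_one, mul_div_assoc', mul_div_cancel_left₀ c hpos.ne']
    rw [hkey, Real.mul_rpow hpos.le hpc, ← mul_assoc]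
  have part1 : Tendsto (fun p => ∑ i ∈ Finset.range p, u p i) atTop (nhds L) := by
    refine Metric.tendsto_nhds.mpr fun δ hδ => ?_
    have hL2 : (0:ℝ) < L + 2 := by linarith
    set ε := min 1 (δ / (2 * (L + 2))) with hεdef
    have hε : 0 < ε := lt_min one_pos (by positivity)
    have hε1 : ε ≤ 1 := min_le_left _ _
    have hεδ : ε * (L + 2) ≤ δ / 2 := by
      have h := min_le_right 1 (δ / (2 * (L + 2)))
      have h2 : ε * (L+2) ≤ (δ / (2 * (L + 2))) * (L+2) :=
        mul_le_mul_of_nonneg_right h hL2.le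
      calc ε * (L+2) ≤ (δ / (2 * (L + 2))) * (L+2) := h2
        _ = δ / 2 := by field_simp
    have hplus := Metric.tendsto_nhds.mp (hshift M) ε hε
    have hminus := Metric.tendsto_nhds.mp (hshift (-M)) ε hε
    filter_upwards [key ε hε hε1, hplus, hminus] with p hkey hp hm
    simp only [← sub_eq_add_neg] at hm
    rw [Real.dist_eq] at hp hm ⊢
    obtain ⟨hpos, hbd⟩ := hkey
    set Dp := (∑ i ∈ Finset.range p, σ i ^ α) * (a p * x + M) ^ (-α) with hDp
    set Dm := (∑ i ∈ Finset.range p, σ i ^ α) * (a p * x - M) ^ (-α) with hDm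
    have hub : ∑ i ∈ Finset.range p, u p i ≤ (1+ε) * Dm := by
      calc ∑ i ∈ Finset.range p, u p i
          ≤ ∑ i ∈ Finset.range p, (1+ε) * (σ i ^ α * (a p * x - M) ^ (-α)) :=
            Finset.sum_le_sum fun i hi => (hbd i hi).2
        _ = (1+ε) * Dm := by
            rw [← Finset.mul_sum, ← Finset.sum_mul]
    have hlb : (1-ε) * Dp ≤ ∑ i ∈ Finset.range p, u p i := by
      calc (1-ε) * Dp
          = ∑ i ∈ Finset.range p, (1-ε) * (σ i ^ α * (a p * x + M) ^ (-α)) := by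
            rw [← Finset.mul_sum, ← Finset.sum_mul]
        _ ≤ ∑ i ∈ Finset.range p, u p i := Finset.sum_le_sum fun i hi => (hbd i hi).1
    have hDmle : Dm ≤ L + ε := by cases abs_lt.mp hm; linarith
    have hDpge : L - ε ≤ Dp := by cases abs_lt.mp hp; linarith
    have h1 : ∑ i ∈ Finset.range p, u p i ≤ (1+ε)*(L+ε) :=
      hub.trans (mul_le_mul_of_nonneg_left hDmle (by linarith))
    have h2 : (1-ε)*(L-ε) ≤ ∑ i ∈ Finset.range p, u p i :=
      le_trans (mul_le_mul_of_nonneg_left hDpge (by linarith)) hlb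
    have hε2 : ε^2 ≤ ε := by rw [sq]; exact mul_le_of_le_one_right hε.le hε1
    rw [abs_lt]
    constructor <;> linarith [h1, h2, sq_nonneg ε]
  have hm0 : Tendsto (fun p => 2 * C₂ ^ α * (a p * x - M) ^ (-α)) atTop (nhds 0) := by
    have h1 : Tendsto (fun p => a p * x - M) atTop atTop :=
      tendsto_atTop_add_const_right _ _ hax
    have h2 := (tendsto_rpow_neg_atTop hα).comp h1
    have := h2.const_mul (2 * C₂ ^ α)
    simpa using this
  have hub2 : ∀ᶠ p in atTop, ∀ i ∈ Finset.range p,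
      u p i ≤ 2 * C₂ ^ α * (a p * x - M) ^ (-α) := by
    filter_upwards [key 1 one_pos le_rfl] with p hkey i hi
    obtain ⟨hpos, hbd⟩ := hkey
    refine (hbd i hi).2.trans ?_
    have h1 : σ i ^ α ≤ C₂ ^ α := Real.rpow_le_rpow (hσpos i).le (hσ i).2 hα.le
    have h2 : (0:ℝ) ≤ (a p * x - M) ^ (-α) := Real.rpow_nonneg hpos.le _
    nlinarith [mul_le_mul_of_nonneg_right h1 h2]
  have part3 : ∀ᶠ p in atTop, ∀ i ∈ Finset.range p, u p i ≤ 1/2 := by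
    have hev := hm0.eventually_le_const (show (0:ℝ) < 1/2 by norm_num)
    filter_upwards [hub2, hev] with p hp hmp i hi
    exact (hp i hi).trans hmp
  have part2 : Tendsto (fun p => ∑ i ∈ Finset.range p, (u p i)^2) atTop (nhds 0) := by
    have hbnd : ∀ᶠ p in atTop, ∑ i ∈ Finset.range p, (u p i)^2 ≤
        (2 * C₂ ^ α * (a p * x - M) ^ (-α)) * ∑ i ∈ Finset.range p, u p i := by
      filter_upwards [hub2] with p hp
      calc ∑ i ∈ Finset.range p, (u p i)^2
          ≤ ∑ i ∈ Finset.range p, (2 * C₂ ^ α * (a p * x - M) ^ (-α)) * u p i :=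
            Finset.sum_le_sum fun i hi => by
              rw [sq]; exact mul_le_mul_of_nonneg_right (hp i hi) (hunn p i)
        _ = (2 * C₂ ^ α * (a p * x - M) ^ (-α)) * ∑ i ∈ Finset.range p, u p i :=
            (Finset.mul_sum _ _ _).symm
    have hlim : Tendsto (fun p => (2 * C₂ ^ α * (a p * x - M) ^ (-α)) *
        ∑ i ∈ Finset.range p, u p i) atTop (nhds 0) := by
      simpa using hm0.mul part1
    exact squeeze_zero'
      (Eventually.of_forall fun p => Finset.sum_nonneg fun i _ => sq_nonneg _) hbnd hlim
  exact ⟨part1, part2, part3⟩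

variable {σ : ℕ → ℝ} {C₁ C₂ α : ℝ}

lemma sum_rpow_lb (hC₁ : 0 < C₁) (hσ : ∀ i, σ i ∈ Set.Icc C₁ C₂) (hα : 0 < α) (p : ℕ) :
    (p:ℝ) * C₁ ^ α ≤ ∑ i ∈ Finset.range p, σ i ^ α := by
  calc (p:ℝ) * C₁ ^ α = ∑ _i ∈ Finset.range p, C₁ ^ α := by
        simp [Finset.sum_const, nsmul_eq_mul]
    _ ≤ ∑ i ∈ Finset.range p, σ i ^ α :=
        Finset.sum_le_sum fun i _ => Real.rpow_le_rpow hC₁.le (hσ i).1 hα.le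

lemma sum_rpow_ub (hC₁ : 0 < C₁) (hσ : ∀ i, σ i ∈ Set.Icc C₁ C₂) (hα : 0 < α) (p : ℕ) :
    ∑ i ∈ Finset.range p, σ i ^ α ≤ (p:ℝ) * C₂ ^ α := by
  calc ∑ i ∈ Finset.range p, σ i ^ α
      ≤ ∑ _i ∈ Finset.range p, C₂ ^ α :=
        Finset.sum_le_sum fun i _ =>
          Real.rpow_le_rpow (hC₁.trans_le (hσ i).1).le (hσ i).2 hα.le
    _ = (p:ℝ) * C₂ ^ α := by simp [Finset.sum_const, nsmul_eq_mul]

lemma normConst_lb (hC₁ : 0 < C₁) (hσ : ∀ i, σ i ∈ Set.Icc C₁ C₂) (hα : 0 < α) (p : ℕ) :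
    C₁ * (p:ℝ) ^ (1/α) ≤ normConst σ α p := by
  have h1 : ((p:ℝ) * C₁ ^ α) ^ (1/α) ≤ normConst σ α p :=
    Real.rpow_le_rpow (by positivity) (sum_rpow_lb hC₁ hσ hα p) (by positivity)
  calc C₁ * (p:ℝ) ^ (1/α) = ((p:ℝ) * C₁ ^ α) ^ (1/α) := by
        rw [Real.mul_rpow (Nat.cast_nonneg p) (by positivity), ← Real.rpow_mul hC₁.le,
          mul_one_div, div_self hα.ne', Real.rpow_one, mul_comm]
    _ ≤ normConst σ α p := h1

lemma normConst_ub (hC₁ : 0 < C₁) (hσ : ∀ i, σ i ∈ Set.Icc C₁ C₂) (hα : 0 < α) (p : ℕ) :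
    normConst σ α p ≤ C₂ * (p:ℝ) ^ (1/α) := by
  have hC₂ : 0 < C₂ := hC₁.trans_le ((hσ 0).1.trans (hσ 0).2)
  have h1 : normConst σ α p ≤ ((p:ℝ) * C₂ ^ α) ^ (1/α) := by
    refine Real.rpow_le_rpow ?_ (sum_rpow_ub hC₁ hσ hα p) (by positivity)
    exact Finset.sum_nonneg fun i _ => Real.rpow_nonneg (hC₁.trans_le (hσ i).1).le _
  calc normConst σ α p ≤ ((p:ℝ) * C₂ ^ α) ^ (1/α) := h1
    _ = C₂ * (p:ℝ) ^ (1/α) := by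
        rw [Real.mul_rpow (Nat.cast_nonneg p) (by positivity), ← Real.rpow_mul hC₂.le,
          mul_one_div, div_self hα.ne', Real.rpow_one, mul_comm]

lemma normConst_pos (hC₁ : 0 < C₁) (hσ : ∀ i, σ i ∈ Set.Icc C₁ C₂) (hα : 0 < α) {p : ℕ}
    (hp : 1 ≤ p) : 0 < normConst σ α p := by
  refine lt_of_lt_of_le ?_ (normConst_lb hC₁ hσ hα p)
  have : (0:ℝ) < (p:ℝ) := by exact_mod_cast hp
  positivity

lemma normConst_rpow (hC₁ : 0 < C₁) (hσ : ∀ i, σ i ∈ Set.Icc C₁ C₂) (hα : 0 < α) (p : ℕ) :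
    (normConst σ α p) ^ α = ∑ i ∈ Finset.range p, σ i ^ α := by
  rw [normConst, ← Real.rpow_mul
    (Finset.sum_nonneg fun i _ => Real.rpow_nonneg (hC₁.trans_le (hσ i).1).le _),
    one_div, inv_mul_cancel₀ hα.ne', Real.rpow_one]

lemma normConst_tendsto (hC₁ : 0 < C₁) (hσ : ∀ i, σ i ∈ Set.Icc C₁ C₂) (hα : 0 < α) :
    Tendsto (normConst σ α) atTop atTop := by
  refine tendsto_atTop_mono (normConst_lb hC₁ hσ hα) ?_
  have h := (tendsto_rpow_atTop (by positivity : (0:ℝ) < 1/α)).comp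
    (tendsto_natCast_atTop_atTop (R := ℝ))
  exact h.const_mul_atTop hC₁

lemma ratio_tendsto (hC₁ : 0 < C₁) (hC₁₂ : C₁ ≤ C₂) (hσ : ∀ i, σ i ∈ Set.Icc C₁ C₂)
    {α₁ α₂ : ℝ} (hα₁ : 0 < α₁) (hα₂ : 0 < α₂) (hα : α₁ < α₂) :
    Tendsto (fun p : ℕ => normConst σ α₁ p / normConst σ α₂ p) atTop atTop := by
  have hC₂ : 0 < C₂ := hC₁.trans_le hC₁₂
  have hδ : 0 < 1/α₁ - 1/α₂ := by
    have := one_div_lt_one_div_of_lt hα₁ hα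
    linarith
  have hlim : Tendsto (fun p : ℕ => (C₁/C₂) * (p:ℝ) ^ (1/α₁ - 1/α₂)) atTop atTop := by
    have h := (tendsto_rpow_atTop hδ).comp (tendsto_natCast_atTop_atTop (R := ℝ))
    exact h.const_mul_atTop (div_pos hC₁ hC₂)
  refine tendsto_atTop_mono' atTop ?_ hlim
  filter_upwards [eventually_ge_atTop 1] with p hp
  have hppos : (0:ℝ) < (p:ℝ) := by exact_mod_cast hp
  have h1 := normConst_lb hC₁ hσ hα₁ p
  have h2 := normConst_ub hC₁ hσ hα₂ p
  have h3 : 0 < normConst σ α₂ p := normConst_pos hC₁ hσ hα₂ hp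
  calc (C₁/C₂) * (p:ℝ) ^ (1/α₁ - 1/α₂)
      = (C₁ * (p:ℝ) ^ (1/α₁)) / (C₂ * (p:ℝ) ^ (1/α₂)) := by
        rw [Real.rpow_sub hppos, div_mul_div_comm]
    _ ≤ normConst σ α₁ p / normConst σ α₂ p :=
        div_le_div₀ (le_trans (by positivity) h1) h1 (by positivity) h2

def pickSets (d : ℕ) (A B : ℕ → Set ℝ) : ∀ i : Unit ⊕ ℕ ⊕ ℕ, Set (mixCodom d i)
  | Sum.inl _ => Set.univ
  | Sum.inr (Sum.inl k) => A k
  | Sum.inr (Sum.inr k) => B k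

lemma prob_identity
    {Ω : Type*} [MeasurableSpace Ω] (P : Measure Ω) [IsProbabilityMeasure P]
    (d : ℕ) (Z : Ω → Fin d → ℝ) (hZm : Measurable Z)
    (f : ℕ → (Fin d → ℝ) → ℝ) (hfm : ∀ i, Measurable (f i))
    {C₁ C₂ : ℝ} (hC₁ : 0 < C₁)
    (σ : ℕ → ℝ) (hσ : ∀ i, σ i ∈ Set.Icc C₁ C₂)
    (ε₁ ε₂ : ℕ → Ω → ℝ) (hε₁m : ∀ i, Measurable (ε₁ i)) (hε₂m : ∀ i, Measurable (ε₂ i))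
    (hid₁ : ∀ i, IdentDistrib (ε₁ i) (ε₁ 0) P P)
    (hid₂ : ∀ i, IdentDistrib (ε₂ i) (ε₂ 0) P P)
    (hindep : iIndepFun (m := fun i => mixCodomMeasurableSpace d i) (mixFun Z ε₁ ε₂) P)
    (X₁ X₂ : ℕ → Ω → ℝ)
    (hX₁ : ∀ i ω, X₁ i ω = f i (Z ω) + σ i * ε₁ i ω)
    (hX₂ : ∀ i ω, X₂ i ω = f i (Z ω) + σ i * ε₂ i ω)
    (t : ℝ) {p : ℕ} (hp : 1 ≤ p) :
    P {ω | Qmax X₁ X₂ p p ω ≤ t} =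
      ∫⁻ z, (∏ i ∈ Finset.range p, P.map (ε₁ 0) (Set.Iic ((t - f i z) / σ i))) *
            (∏ i ∈ Finset.range p, P.map (ε₂ 0) (Set.Iic ((t - f i z) / σ i)))
        ∂(P.map Z) := by
  classical
  have hσpos : ∀ i, 0 < σ i := fun i => hC₁.trans_le (hσ i).1
  haveI : Nonempty (Fin p) := ⟨⟨0, hp⟩⟩
  set c : ℕ → (Fin d → ℝ) → ℝ := fun i z => (t - f i z) / σ i with hc
  set V : Ω → (Fin p → ℝ) × (Fin p → ℝ) :=
    fun ω => (fun k => ε₁ k ω, fun k => ε₂ k ω) with hV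
  have hVm : Measurable V := by
    rw [hV]
    exact (measurable_pi_lambda (fun ω (k : Fin p) => ε₁ k ω) fun k => hε₁m k).prodMk
      (measurable_pi_lambda (fun ω (k : Fin p) => ε₂ k ω) fun k => hε₂m k)
  set C : Set ((Fin d → ℝ) × ((Fin p → ℝ) × (Fin p → ℝ))) :=
    {q | ∀ k : Fin p, q.2.1 k ≤ c k q.1 ∧ q.2.2 k ≤ c k q.1} with hCdef
  have hev : {ω | Qmax X₁ X₂ p p ω ≤ t} = (fun ω => (Z ω, V ω)) ⁻¹' C := by
    ext ω
    simp only [Set.mem_setOf_eq, Set.mem_preimage, Qmax, max_le_iff, hCdef]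
    have hbdd1 : BddAbove (Set.range fun i : Fin p => X₁ i ω) := (Set.finite_range _).bddAbove
    have hbdd2 : BddAbove (Set.range fun i : Fin p => X₂ i ω) := (Set.finite_range _).bddAbove
    rw [ciSup_le_iff hbdd1, ciSup_le_iff hbdd2]
    have hiff1 : ∀ k : Fin p, (X₁ k ω ≤ t ↔ ε₁ k ω ≤ c k (Z ω)) := fun k => by
      rw [hX₁, hc]; rw [le_div_iff₀ (hσpos k)]
      constructor <;> intro h <;> nlinarith
    have hiff2 : ∀ k : Fin p, (X₂ k ω ≤ t ↔ ε₂ k ω ≤ c k (Z ω)) := fun k => by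
      rw [hX₂, hc]; rw [le_div_iff₀ (hσpos k)]
      constructor <;> intro h <;> nlinarith
    constructor
    · rintro ⟨h1, h2⟩ k; exact ⟨(hiff1 k).mp (h1 k), (hiff2 k).mp (h2 k)⟩
    · intro h; exact ⟨fun k => (hiff1 k).mpr (h k).1, fun k => (hiff2 k).mpr (h k).2⟩
  have hcm : ∀ k : ℕ, Measurable (fun z : Fin d → ℝ => c k z) := fun k =>
    (measurable_const.sub (hfm k)).div_const _
  have hCm : MeasurableSet C := by
    have : C = ⋂ k : Fin p, ({q : (Fin d → ℝ) × ((Fin p → ℝ) × (Fin p → ℝ)) |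
        q.2.1 k ≤ c k q.1} ∩ {q | q.2.2 k ≤ c k q.1}) := by
      ext q; simp [hCdef, Set.mem_iInter, forall_and]
    rw [this]
    refine MeasurableSet.iInter fun k => MeasurableSet.inter ?_ ?_
    · exact measurableSet_le (measurable_snd.fst.eval)
        ((hcm k).comp measurable_fst)
    · exact measurableSet_le (measurable_snd.snd.eval)
        ((hcm k).comp measurable_fst)
  set T : Finset (Unit ⊕ ℕ ⊕ ℕ) :=
    ((Finset.range p).image (fun k => Sum.inr (Sum.inl k))) ∪
    ((Finset.range p).image (fun k => Sum.inr (Sum.inr k))) with hT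
  have hmem1 : ∀ k : Fin p, (Sum.inr (Sum.inl k.1) : Unit ⊕ ℕ ⊕ ℕ) ∈ T := fun k => by
    simp only [hT, Finset.mem_union, Finset.mem_image]
    exact Or.inl ⟨k.1, Finset.mem_range.mpr k.2, rfl⟩
  have hmem2 : ∀ k : Fin p, (Sum.inr (Sum.inr k.1) : Unit ⊕ ℕ ⊕ ℕ) ∈ T := fun k => by
    simp only [hT, Finset.mem_union, Finset.mem_image]
    exact Or.inr ⟨k.1, Finset.mem_range.mpr k.2, rfl⟩
  have hZV : IndepFun Z V P := by
    set S : Finset (Unit ⊕ ℕ ⊕ ℕ) := {Sum.inl ()} with hS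
    have hdisj : Disjoint S T := by
      rw [Finset.disjoint_left]
      rintro a ha hb
      simp only [hS, Finset.mem_singleton] at ha
      subst ha
      simp [hT] at hb
    have hmeas : ∀ i, Measurable (mixFun Z ε₁ ε₂ i) := by
      rintro (⟨⟩ | i | j)
      · exact hZm
      · exact hε₁m i
      · exact hε₂m j
    have base := hindep.indepFun_finset S T hdisj hmeas
    have hmemS : (Sum.inl () : Unit ⊕ ℕ ⊕ ℕ) ∈ S := by simp [hS]
    let gS : (∀ i : S, mixCodom d i) → (Fin d → ℝ) := fun v => v ⟨Sum.inl (), hmemS⟩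
    let gT : (∀ i : T, mixCodom d i) → (Fin p → ℝ) × (Fin p → ℝ) := fun v =>
      (fun k => v ⟨Sum.inr (Sum.inl k.1), hmem1 k⟩,
       fun k => v ⟨Sum.inr (Sum.inr k.1), hmem2 k⟩)
    have hgS : Measurable gS := measurable_pi_apply _
    have hgT : Measurable gT := by
      refine Measurable.prodMk ?_ ?_
      · exact measurable_pi_lambda _ fun k => measurable_pi_apply _
      · exact measurable_pi_lambda _ fun k => measurable_pi_apply _
    exact base.comp hgS hgT
  haveI : IsProbabilityMeasure (P.map V) := Measure.isProbabilityMeasure_map hVm.aemeasurable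
  haveI : IsProbabilityMeasure (P.map Z) := Measure.isProbabilityMeasure_map hZm.aemeasurable
  have hmapeq : P.map (fun ω => (Z ω, V ω)) = (P.map Z).prod (P.map V) :=
    (indepFun_iff_map_prod_eq_prod_map_map hZm.aemeasurable hVm.aemeasurable).mp hZV
  rw [hev, ← Measure.map_apply (hZm.prodMk hVm) hCm, hmapeq, Measure.prod_apply hCm]
  refine lintegral_congr fun z => ?_
  have hslicem : MeasurableSet {v : (Fin p → ℝ) × (Fin p → ℝ) |
      ∀ k : Fin p, v.1 k ≤ c k z ∧ v.2 k ≤ c k z} := by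
    have : {v : (Fin p → ℝ) × (Fin p → ℝ) | ∀ k : Fin p, v.1 k ≤ c k z ∧ v.2 k ≤ c k z} =
        ⋂ k : Fin p, ({v : (Fin p → ℝ) × (Fin p → ℝ) | v.1 k ≤ c k z} ∩ {v | v.2 k ≤ c k z}) := by
      ext v; simp [Set.mem_iInter, forall_and]
    rw [this]
    refine MeasurableSet.iInter fun k => MeasurableSet.inter ?_ ?_
    · exact measurableSet_le (measurable_fst.eval) measurable_const
    · exact measurableSet_le (measurable_snd.eval) measurable_const
  have hslice : Prod.mk z ⁻¹' C = {v : (Fin p → ℝ) × (Fin p → ℝ) |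
      ∀ k : Fin p, v.1 k ≤ c k z ∧ v.2 k ≤ c k z} := rfl
  rw [hslice, Measure.map_apply hVm hslicem]
  -- now factorize via independence
  have hsets : True := trivial
  have hpre : V ⁻¹' {v : (Fin p → ℝ) × (Fin p → ℝ) |
      ∀ k : Fin p, v.1 k ≤ c k z ∧ v.2 k ≤ c k z} =
      ⋂ i ∈ T, mixFun Z ε₁ ε₂ i ⁻¹' pickSets d (fun k => Set.Iic (c k z)) (fun k => Set.Iic (c k z)) i := by
    ext ω
    simp only [Set.mem_preimage, Set.mem_setOf_eq, Set.mem_iInter]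
    constructor
    · intro h i hi
      rcases Finset.mem_union.mp hi with hi' | hi' <;>
        obtain ⟨k, hk, rfl⟩ := Finset.mem_image.mp hi'
      · exact (h ⟨k, Finset.mem_range.mp hk⟩).1
      · exact (h ⟨k, Finset.mem_range.mp hk⟩).2
    · intro h k
      exact ⟨h _ (hmem1 k), h _ (hmem2 k)⟩

  have hsetsm : ∀ i, i ∈ T → MeasurableSet[mixCodomMeasurableSpace d i]
      (pickSets d (fun k => Set.Iic (c k z)) (fun k => Set.Iic (c k z)) i) := by
    rintro (⟨⟩ | k | k) _
    · exact MeasurableSet.univ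
    · show MeasurableSet (Set.Iic (c k z)); exact measurableSet_Iic
    · show MeasurableSet (Set.Iic (c k z)); exact measurableSet_Iic
  have hfact := hindep.measure_inter_preimage_eq_mul T hsetsm
  rw [hpre, hfact]
  have hdisj2 : Disjoint ((Finset.range p).image (fun k => (Sum.inr (Sum.inl k) : Unit ⊕ ℕ ⊕ ℕ)))
      ((Finset.range p).image (fun k => (Sum.inr (Sum.inr k) : Unit ⊕ ℕ ⊕ ℕ))) := by
    rw [Finset.disjoint_left]
    rintro a ha hb
    obtain ⟨k, _, rfl⟩ := Finset.mem_image.mp ha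
    obtain ⟨k', _, h⟩ := Finset.mem_image.mp hb
    simp at h
  rw [hT, Finset.prod_union hdisj2, Finset.prod_image (by intro a _ b _ h; simpa using h),
    Finset.prod_image (by intro a _ b _ h; simpa using h)]
  congr 1
  · refine Finset.prod_congr rfl fun k _ => ?_
    show P (ε₁ k ⁻¹' Set.Iic (c k z)) = _
    rw [← Measure.map_apply (hε₁m k) measurableSet_Iic, (hid₁ k).map_eq]
  · refine Finset.prod_congr rfl fun k _ => ?_
    show P (ε₂ k ⁻¹' Set.Iic (c k z)) = _
    rw [← Measure.map_apply (hε₂m k) measurableSet_Iic, (hid₂ k).map_eq]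

/-- Corollary 1, first case: if `α₁ < α₂` then `a_{1,p}/a_{2,p} → ∞` and `P(Q_p ≤ a_{1,p} x) → Ψ_{α₁}(x)` for every `x > 0`. -/
theorem coro1_case1
    {Ω : Type*} [MeasurableSpace Ω] (P : Measure Ω) [IsProbabilityMeasure P]
    (d : ℕ) (Z : Ω → Fin d → ℝ) (hZm : Measurable Z)
    (f : ℕ → (Fin d → ℝ) → ℝ) (hfm : ∀ i, Measurable (f i))
    (hfbdd : ∀ᵐ ω ∂P, ∃ M : ℝ, ∀ i, |f i (Z ω)| ≤ M)
    (C₁ C₂ : ℝ) (hC₁ : 0 < C₁) (hC₁₂ : C₁ ≤ C₂)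
    (σ : ℕ → ℝ) (hσ : ∀ i, σ i ∈ Set.Icc C₁ C₂)
    (α₁ α₂ : ℝ) (hα₁ : 0 < α₁) (hα₂ : 0 < α₂)
    (ε₁ ε₂ : ℕ → Ω → ℝ) (hε₁m : ∀ i, Measurable (ε₁ i)) (hε₂m : ∀ i, Measurable (ε₂ i))
    (hid₁ : ∀ i, IdentDistrib (ε₁ i) (ε₁ 0) P P)
    (hid₂ : ∀ i, IdentDistrib (ε₂ i) (ε₂ 0) P P)
    (hindep : iIndepFun (m := fun i => mixCodomMeasurableSpace d i) (mixFun Z ε₁ ε₂) P)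
    (htail₁ : Tendsto (fun x : ℝ => x ^ α₁ * (P {ω | x < ε₁ 0 ω}).toReal) atTop (nhds 1))
    (htail₂ : Tendsto (fun x : ℝ => x ^ α₂ * (P {ω | x < ε₂ 0 ω}).toReal) atTop (nhds 1))
    (X₁ X₂ : ℕ → Ω → ℝ)
    (hX₁ : ∀ i ω, X₁ i ω = f i (Z ω) + σ i * ε₁ i ω)
    (hX₂ : ∀ i ω, X₂ i ω = f i (Z ω) + σ i * ε₂ i ω)
    (hα : α₁ < α₂) :
    Tendsto (fun p : ℕ => normConst σ α₁ p / normConst σ α₂ p) atTop atTop ∧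
    ∀ x : ℝ, 0 < x →
      Tendsto (fun p : ℕ => (P {ω | Qmax X₁ X₂ p p ω ≤ normConst σ α₁ p * x}).toReal) atTop (nhds (frechetCDF α₁ x)) := by
  have hC₂ : 0 < C₂ := lt_of_lt_of_le hC₁ hC₁₂
  have hσpos : ∀ i, 0 < σ i := fun i => hC₁.trans_le (hσ i).1
  have part1 := ratio_tendsto (σ := σ) hC₁ hC₁₂ hσ hα₁ hα₂ hα
  refine ⟨part1, fun x hx => ?_⟩
  set a : ℕ → ℝ := fun p => normConst σ α₁ p with ha_def
  set μZ := P.map Z with hμZ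
  set μ₁ := P.map (ε₁ 0) with hμ₁
  set μ₂ := P.map (ε₂ 0) with hμ₂
  haveI : IsProbabilityMeasure μZ := Measure.isProbabilityMeasure_map hZm.aemeasurable
  haveI : IsProbabilityMeasure μ₁ := Measure.isProbabilityMeasure_map (hε₁m 0).aemeasurable
  haveI : IsProbabilityMeasure μ₂ := Measure.isProbabilityMeasure_map (hε₂m 0).aemeasurable
  have hmap₁ : ∀ s : ℝ, P {ω | s < ε₁ 0 ω} = μ₁ (Set.Ioi s) := fun s => by
    rw [hμ₁, Measure.map_apply (hε₁m 0) measurableSet_Ioi]; rfl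
  have hmap₂ : ∀ s : ℝ, P {ω | s < ε₂ 0 ω} = μ₂ (Set.Ioi s) := fun s => by
    rw [hμ₂, Measure.map_apply (hε₂m 0) measurableSet_Ioi]; rfl
  have htail₁' : Tendsto (fun s : ℝ => s ^ α₁ * (μ₁ (Set.Ioi s)).toReal) atTop (nhds 1) :=
    htail₁.congr fun s => by rw [hmap₁ s]
  have htail₂' : Tendsto (fun s : ℝ => s ^ α₂ * (μ₂ (Set.Ioi s)).toReal) atTop (nhds 1) :=
    htail₂.congr fun s => by rw [hmap₂ s]
  have haT : Tendsto a atTop atTop := normConst_tendsto hC₁ hσ hα₁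
  have hr₁ : Tendsto (fun p => (∑ i ∈ Finset.range p, σ i ^ α₁) * (a p * x) ^ (-α₁)) atTop
      (nhds (x ^ (-α₁))) := by
    have heq : ∀ᶠ p in atTop, x ^ (-α₁) =
        (∑ i ∈ Finset.range p, σ i ^ α₁) * (a p * x) ^ (-α₁) := by
      filter_upwards [eventually_ge_atTop 1] with p hp
      have hap : 0 < a p := normConst_pos hC₁ hσ hα₁ hp
      rw [Real.mul_rpow hap.le hx.le, ← normConst_rpow hC₁ hσ hα₁ p, ← mul_assoc,
        ← Real.rpow_add hap]
      simp
    exact tendsto_const_nhds.congr' heq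
  have hba : Tendsto (fun p => normConst σ α₂ p / a p) atTop (nhds 0) := by
    have h := part1.inv_tendsto_atTop
    refine h.congr fun p => ?_
    simp [Pi.inv_apply, inv_div, ha_def]
  have hba2 : Tendsto (fun p => (normConst σ α₂ p / a p) ^ α₂) atTop (nhds 0) := by
    have hcont := (Real.continuousAt_rpow_const 0 α₂ (Or.inr hα₂.le)).tendsto
    have h := hcont.comp hba
    simpa [Real.zero_rpow hα₂.ne', Function.comp_def] using h
  have hr₂ : Tendsto (fun p => (∑ i ∈ Finset.range p, σ i ^ α₂) * (a p * x) ^ (-α₂)) atTop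
      (nhds 0) := by
    have h3 := hba2.mul_const (x ^ (-α₂))
    rw [zero_mul] at h3
    refine h3.congr' ?_
    filter_upwards [eventually_ge_atTop 1] with p hp
    have hap : 0 < a p := normConst_pos hC₁ hσ hα₁ hp
    have hbp : 0 < normConst σ α₂ p := normConst_pos hC₁ hσ hα₂ hp
    rw [Real.div_rpow hbp.le hap.le, Real.mul_rpow hap.le hx.le,
      ← normConst_rpow hC₁ hσ hα₂ p, Real.rpow_neg hap.le]
    ring
  -- a.e. boundedness of the factors
  have hAmeas : MeasurableSet {z : Fin d → ℝ | ∃ M : ℝ, ∀ i, |f i z| ≤ M} := by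
    have he : {z : Fin d → ℝ | ∃ M : ℝ, ∀ i, |f i z| ≤ M} =
        ⋃ n : ℕ, ⋂ i, {z | |f i z| ≤ (n:ℝ)} := by
      ext z
      simp only [Set.mem_setOf_eq, Set.mem_iUnion, Set.mem_iInter]
      constructor
      · rintro ⟨M, hM⟩
        exact ⟨⌈M⌉₊, fun i => (hM i).trans (Nat.le_ceil M)⟩
      · rintro ⟨n, hn⟩; exact ⟨n, hn⟩
    rw [he]
    exact MeasurableSet.iUnion fun n => MeasurableSet.iInter fun i =>
      measurableSet_le (hfm i).abs measurable_const
  have hae : ∀ᵐ z ∂μZ, ∃ M : ℝ, ∀ i, |f i z| ≤ M :=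
    (ae_map_iff hZm.aemeasurable hAmeas).mpr hfbdd
  -- pointwise limit
  have hpt : ∀ᵐ z ∂μZ, Tendsto (fun p =>
      (∏ i ∈ Finset.range p, μ₁ (Set.Iic ((a p * x - f i z) / σ i))) *
      (∏ i ∈ Finset.range p, μ₂ (Set.Iic ((a p * x - f i z) / σ i)))) atTop
      (nhds (ENNReal.ofReal (Real.exp (-x ^ (-α₁))))) := by
    filter_upwards [hae] with z hz
    obtain ⟨M₀, hM₀⟩ := hz
    have hg : ∀ i, |f i z| ≤ max M₀ 0 := fun i => (hM₀ i).trans (le_max_left _ _)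
    obtain ⟨h1S, h1Q, h1half⟩ := tail_sum (g := fun i => f i z) hα₁ hx (le_max_right M₀ 0)
      hC₁ hC₁₂ hσ hg htail₁' haT (Real.rpow_nonneg hx.le _) hr₁
    obtain ⟨h2S, h2Q, h2half⟩ := tail_sum (g := fun i => f i z) hα₂ hx (le_max_right M₀ 0)
      hC₁ hC₁₂ hσ hg htail₂' haT le_rfl hr₂
    have h01₁ : ∀ᶠ p in atTop, ∀ i ∈ Finset.range p,
        0 ≤ (μ₁ (Set.Ioi ((a p * x - f i z) / σ i))).toReal ∧
        (μ₁ (Set.Ioi ((a p * x - f i z) / σ i))).toReal ≤ 1/2 := by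
      filter_upwards [h1half] with p hp i hi
      exact ⟨ENNReal.toReal_nonneg, hp i hi⟩
    have h01₂ : ∀ᶠ p in atTop, ∀ i ∈ Finset.range p,
        0 ≤ (μ₂ (Set.Ioi ((a p * x - f i z) / σ i))).toReal ∧
        (μ₂ (Set.Ioi ((a p * x - f i z) / σ i))).toReal ≤ 1/2 := by
      filter_upwards [h2half] with p hp i hi
      exact ⟨ENNReal.toReal_nonneg, hp i hi⟩
    have hP1 := prod_one_sub_tendsto h01₁ h1S h1Q
    have hP2 := prod_one_sub_tendsto h01₂ h2S h2Q
    have hreal := hP1.mul hP2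
    rw [neg_zero, Real.exp_zero, mul_one] at hreal
    have hconv : ∀ p : ℕ,
        (∏ i ∈ Finset.range p, μ₁ (Set.Iic ((a p * x - f i z) / σ i))) *
        (∏ i ∈ Finset.range p, μ₂ (Set.Iic ((a p * x - f i z) / σ i))) =
        ENNReal.ofReal
          ((∏ i ∈ Finset.range p, (1 - (μ₁ (Set.Ioi ((a p * x - f i z) / σ i))).toReal)) *
           (∏ i ∈ Finset.range p, (1 - (μ₂ (Set.Ioi ((a p * x - f i z) / σ i))).toReal))) := by
      intro p
      rw [prod_Iic_eq_ofReal (μ := μ₁), prod_Iic_eq_ofReal (μ := μ₂),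
        ← ENNReal.ofReal_mul]
      exact Finset.prod_nonneg fun i _ => by
        linarith [tail_toReal_le_one (μ := μ₁) (Set.Ioi ((a p * x - f i z) / σ i))]
    have := ENNReal.tendsto_ofReal hreal
    exact Tendsto.congr (fun p => (hconv p).symm) this
  -- measurability
  have hφm : ∀ p : ℕ, Measurable fun z : Fin d → ℝ =>
      (∏ i ∈ Finset.range p, μ₁ (Set.Iic ((a p * x - f i z) / σ i))) *
      (∏ i ∈ Finset.range p, μ₂ (Set.Iic ((a p * x - f i z) / σ i))) := by
    intro p
    refine Measurable.mul ?_ ?_ <;>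
      exact Finset.measurable_prod _ fun i _ =>
        (measurable_meas_Iic _).comp ((measurable_const.sub (hfm i)).div_const _)
  have hbound : ∀ p : ℕ, (fun z : Fin d → ℝ =>
      (∏ i ∈ Finset.range p, μ₁ (Set.Iic ((a p * x - f i z) / σ i))) *
      (∏ i ∈ Finset.range p, μ₂ (Set.Iic ((a p * x - f i z) / σ i)))) ≤ᵐ[μZ]
      fun _ => (1 : ENNReal) := by
    intro p
    refine Filter.Eventually.of_forall fun z => ?_
    exact mul_le_one' (Finset.prod_le_one' fun i _ => prob_le_one)
      (Finset.prod_le_one' fun i _ => prob_le_one)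
  have hDCT := tendsto_lintegral_of_dominated_convergence (μ := μZ)
    (f := fun _ => ENNReal.ofReal (Real.exp (-x ^ (-α₁)))) (fun _ => 1) hφm hbound
    (by simp) hpt
  have hconst : (∫⁻ _z, ENNReal.ofReal (Real.exp (-x ^ (-α₁))) ∂μZ) =
      ENNReal.ofReal (Real.exp (-x ^ (-α₁))) := by
    simp [lintegral_const]
  rw [hconst] at hDCT
  -- identify with the probabilities
  have hident : (fun p : ℕ => ∫⁻ z,
      (∏ i ∈ Finset.range p, μ₁ (Set.Iic ((a p * x - f i z) / σ i))) *
      (∏ i ∈ Finset.range p, μ₂ (Set.Iic ((a p * x - f i z) / σ i))) ∂μZ) =ᶠ[atTop]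
      fun p : ℕ => P {ω | Qmax X₁ X₂ p p ω ≤ normConst σ α₁ p * x} := by
    filter_upwards [eventually_ge_atTop 1] with p hp
    exact (prob_identity P d Z hZm f hfm hC₁ σ hσ ε₁ ε₂ hε₁m hε₂m hid₁ hid₂ hindep
      X₁ X₂ hX₁ hX₂ (a p * x) hp).symm
  have hENN : Tendsto (fun p : ℕ => P {ω | Qmax X₁ X₂ p p ω ≤ normConst σ α₁ p * x}) atTop
      (nhds (ENNReal.ofReal (Real.exp (-x ^ (-α₁))))) := hDCT.congr' hident
  have hfin := (ENNReal.tendsto_toReal (ENNReal.ofReal_ne_top)).comp hENN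
  have : Tendsto (fun p : ℕ => (P {ω | Qmax X₁ X₂ p p ω ≤ normConst σ α₁ p * x}).toReal)
      atTop (nhds (Real.exp (-x ^ (-α₁)))) := by
    simpa [ENNReal.toReal_ofReal (Real.exp_nonneg _), Function.comp_def] using hfin
  simpa [frechetCDF, if_pos hx] using this
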